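/- arXiv:1304.7338 — 5 statements merged into one kernel-verified Lean document; each statement's English description precedes it below -/
import Mathlib

section
/- Let (L,[·,·],α) be a multiplicative hom-Lie superalgebra over an infinite field K with α bijective, and let ψ : L × L → L be an even bilinear map satisfying ψ(x,y) = -(-1)^{|x||y|}ψ(y,x) and α(ψ(u,v)) = ψ(α(u),α(v)) for all homogeneous u,v. Then the bracket [u,v]_t := [u,v] + tψ(u,v) makes (L,[·,·]_t,α) a hom-Lie superalgebra for every t ∈ K if and only if both of the following hold for all homogeneous u,v,w: (-1)^{|u||w|}ψ(α(u),ψ(v,w)) + (-1)^{|u||v|}ψ(α(v),ψ(w,u)) + (-1)^{|v||w|}ψ(α(w),ψ(u,v)) = 0, and (-1)^{|u||w|}(ψ(α(u),[v,w]) + [α(u),ψ(v,w)]) + (-1)^{|u||v|}(ψ(α(v),[w,u]) + [α(v),ψ(w,u)]) + (-1)^{|v||w|}(ψ(α(w),[u,v]) + [α(w),ψ(u,v)]) = 0. -/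
open Module

/-- The sign `(-1)^{ij}` for degrees `i j : ZMod 2`, valued in the field `K`. -/
def sgn (K : Type*) [Field K] (i j : ZMod 2) : K := (-1 : K) ^ (i.val * j.val)

/-- The raw data of a hom-Lie superalgebra on a `K`-vector space `L`:
a `ZMod 2`-grading, a bilinear bracket and a linear map `α`. -/
structure HomLieSuperData (K : Type*) [Field K] (L : Type*) [AddCommGroup L] [Module K L] where
  grading : ZMod 2 → Submodule K L
  bracket : L →ₗ[K] L →ₗ[K] L
  alpha : L →ₗ[K] L

namespace HomLieSuperData

variable {K : Type*} [Field K] {L : Type*} [AddCommGroup L] [Module K L]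

/-- The axioms making the data of `HomLieSuperData` into a hom-Lie superalgebra. -/
structure IsHomLieSuper (D : HomLieSuperData K L) : Prop where
  internal : DirectSum.IsInternal D.grading
  bracket_even : ∀ i j : ZMod 2, ∀ x ∈ D.grading i, ∀ y ∈ D.grading j,
    D.bracket x y ∈ D.grading (i + j)
  alpha_even : ∀ i : ZMod 2, ∀ x ∈ D.grading i, D.alpha x ∈ D.grading i
  skew : ∀ i j : ZMod 2, ∀ x ∈ D.grading i, ∀ y ∈ D.grading j,
    D.bracket x y = -(sgn K i j) • D.bracket y x
  jacobi : ∀ i j k : ZMod 2, ∀ x ∈ D.grading i, ∀ y ∈ D.grading j, ∀ z ∈ D.grading k,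
    sgn K i k • D.bracket (D.alpha x) (D.bracket y z)
      + sgn K i j • D.bracket (D.alpha y) (D.bracket z x)
      + sgn K j k • D.bracket (D.alpha z) (D.bracket x y) = 0

/-- `D` is multiplicative if `α` is a morphism for the bracket. -/
def IsMultiplicative (D : HomLieSuperData K L) : Prop :=
  ∀ x y : L, D.alpha (D.bracket x y) = D.bracket (D.alpha x) (D.alpha y)

end HomLieSuperData

/-- For a regular multiplicative hom-Lie superalgebra `(L,[·,·],α)` over an
infinite field and an even super-skewsymmetric bilinear map `ψ` commuting with `α`, the
deformed bracket `[u,v]_t = [u,v] + t ψ(u,v)` is a hom-Lie superalgebra structure for every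
`t` if and only if `ψ` satisfies the hom-super-Jacobi identity and the mixed identity with
the original bracket. -/
theorem deformation_iff {K : Type*} [Field K] [Infinite K]
    {L : Type*} [AddCommGroup L] [Module K L]
    (D : HomLieSuperData K L) (hD : D.IsHomLieSuper)
    (hmul : D.IsMultiplicative) (hreg : Function.Bijective D.alpha)
    (ψ : L →ₗ[K] L →ₗ[K] L)
    (hψeven : ∀ i j : ZMod 2, ∀ x ∈ D.grading i, ∀ y ∈ D.grading j, ψ x y ∈ D.grading (i + j))
    (hψskew : ∀ i j : ZMod 2, ∀ x ∈ D.grading i, ∀ y ∈ D.grading j,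
      ψ x y = -(sgn K i j) • ψ y x)
    (hψα : ∀ i j : ZMod 2, ∀ x ∈ D.grading i, ∀ y ∈ D.grading j,
      D.alpha (ψ x y) = ψ (D.alpha x) (D.alpha y)) :
    (∀ t : K, ({ D with bracket := D.bracket + t • ψ } : HomLieSuperData K L).IsHomLieSuper) ↔
      ((∀ i j k : ZMod 2, ∀ u ∈ D.grading i, ∀ v ∈ D.grading j, ∀ w ∈ D.grading k,
          sgn K i k • ψ (D.alpha u) (ψ v w) + sgn K i j • ψ (D.alpha v) (ψ w u)
            + sgn K j k • ψ (D.alpha w) (ψ u v) = 0) ∧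
        (∀ i j k : ZMod 2, ∀ u ∈ D.grading i, ∀ v ∈ D.grading j, ∀ w ∈ D.grading k,
          sgn K i k • (ψ (D.alpha u) (D.bracket v w) + D.bracket (D.alpha u) (ψ v w))
            + sgn K i j • (ψ (D.alpha v) (D.bracket w u) + D.bracket (D.alpha v) (ψ w u))
            + sgn K j k • (ψ (D.alpha w) (D.bracket u v) + D.bracket (D.alpha w) (ψ u v))
            = 0)) := by
  classical
  -- abbreviations
  set Br := D.bracket with hBr
  have expand : ∀ (t : K) (a b c : ZMod 2) (u v w : L),
      sgn K a c • ((D.bracket + t • ψ) (D.alpha u) ((D.bracket + t • ψ) v w))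
        + sgn K a b • ((D.bracket + t • ψ) (D.alpha v) ((D.bracket + t • ψ) w u))
        + sgn K b c • ((D.bracket + t • ψ) (D.alpha w) ((D.bracket + t • ψ) u v))
      = (sgn K a c • D.bracket (D.alpha u) (D.bracket v w)
          + sgn K a b • D.bracket (D.alpha v) (D.bracket w u)
          + sgn K b c • D.bracket (D.alpha w) (D.bracket u v))
        + t • (sgn K a c • (ψ (D.alpha u) (D.bracket v w) + D.bracket (D.alpha u) (ψ v w))
            + sgn K a b • (ψ (D.alpha v) (D.bracket w u) + D.bracket (D.alpha v) (ψ w u))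
            + sgn K b c • (ψ (D.alpha w) (D.bracket u v) + D.bracket (D.alpha w) (ψ u v)))
        + (t * t) • (sgn K a c • ψ (D.alpha u) (ψ v w)
            + sgn K a b • ψ (D.alpha v) (ψ w u)
            + sgn K b c • ψ (D.alpha w) (ψ u v)) := by
    intro t a b c u v w
    simp only [LinearMap.add_apply, LinearMap.smul_apply, map_add, map_smul]
    module
  constructor
  · intro h
    obtain ⟨a, ha0⟩ := exists_ne (0 : K)
    obtain ⟨b, hb⟩ := Infinite.exists_notMem_finset ({0, a} : Finset K)
    simp only [Finset.mem_insert, Finset.mem_singleton, not_or] at hb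
    obtain ⟨hb0, hba⟩ := hb
    have key : ∀ (i j k : ZMod 2), ∀ u ∈ D.grading i, ∀ v ∈ D.grading j, ∀ w ∈ D.grading k,
        ∀ t : K,
        t • (sgn K i k • (ψ (D.alpha u) (D.bracket v w) + D.bracket (D.alpha u) (ψ v w))
            + sgn K i j • (ψ (D.alpha v) (D.bracket w u) + D.bracket (D.alpha v) (ψ w u))
            + sgn K j k • (ψ (D.alpha w) (D.bracket u v) + D.bracket (D.alpha w) (ψ u v)))
          + (t * t) • (sgn K i k • ψ (D.alpha u) (ψ v w)
            + sgn K i j • ψ (D.alpha v) (ψ w u)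
            + sgn K j k • ψ (D.alpha w) (ψ u v)) = 0 := by
      intro i j k u hu v hv w hw t
      have hj := (h t).jacobi i j k u hu v hv w hw
      rw [show ({ D with bracket := D.bracket + t • ψ } : HomLieSuperData K L).bracket
            = D.bracket + t • ψ from rfl,
          show ({ D with bracket := D.bracket + t • ψ } : HomLieSuperData K L).alpha
            = D.alpha from rfl, expand t i j k u v w,
          hD.jacobi i j k u hu v hv w hw, zero_add] at hj
      exact hj
    have split : ∀ B C : L, (∀ t : K, t • B + (t * t) • C = 0) → B = 0 ∧ C = 0 := by
      intro B C hBC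
      have h1 : B + a • C = 0 := by
        have := hBC a
        rw [show a • B + (a * a) • C = a • (B + a • C) by
          rw [smul_add, smul_smul]] at this
        exact (smul_eq_zero.mp this).resolve_left ha0
      have h2 : B + b • C = 0 := by
        have := hBC b
        rw [show b • B + (b * b) • C = b • (B + b • C) by
          rw [smul_add, smul_smul]] at this
        exact (smul_eq_zero.mp this).resolve_left hb0
      have hC : C = 0 := by
        have : (a - b) • C = 0 := by
          rw [sub_smul]
          have := sub_eq_zero.mpr (h1.trans h2.symm)
          rw [add_sub_add_left_eq_sub] at this
          exact this
        exact (smul_eq_zero.mp this).resolve_left (sub_ne_zero.mpr (Ne.symm hba))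
      have hB : B = 0 := by
        have := h1
        rw [hC, smul_zero, add_zero] at this
        exact this
      exact ⟨hB, hC⟩
    constructor
    · intro i j k u hu v hv w hw
      exact (split _ _ (key i j k u hu v hv w hw)).2
    · intro i j k u hu v hv w hw
      exact (split _ _ (key i j k u hu v hv w hw)).1
  · rintro ⟨h1, h2⟩ t
    refine ⟨hD.internal, ?_, hD.alpha_even, ?_, ?_⟩
    · intro i j x hx y hy
      simp only [LinearMap.add_apply, LinearMap.smul_apply]
      exact add_mem (hD.bracket_even i j x hx y hy)
        (Submodule.smul_mem _ _ (hψeven i j x hx y hy))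
    · intro i j x hx y hy
      simp only [LinearMap.add_apply, LinearMap.smul_apply]
      rw [hD.skew i j x hx y hy, hψskew i j x hx y hy]
      module
    · intro i j k u hu v hv w hw
      rw [show ({ D with bracket := D.bracket + t • ψ } : HomLieSuperData K L).bracket
            = D.bracket + t • ψ from rfl,
          show ({ D with bracket := D.bracket + t • ψ } : HomLieSuperData K L).alpha
            = D.alpha from rfl, expand t i j k u v w,
          hD.jacobi i j k u hu v hv w hw, h1 i j k u hu v hv w hw,
          h2 i j k u hu v hv w hw, smul_zero, smul_zero]
      simp
end

section
/- Let (L,[·,·],α) be a hom-Lie superalgebra over a field K satisfying ad(x)∘ad(α(y)) - (-1)^{|x||y|} ad(y)∘ad(α(x)) = α∘ad([x,y]) for all homogeneous x,y (so that the coadjoint representation π exists), and let ω : L × L → L* be an even bilinear map. Then (L ⊕ L*, [·,·]_{L⊕L*}, α'), with [x+f, y+g]_{L⊕L*} := [x,y] + ω(x,y) + π(x)g - (-1)^{|x||y|}π(y)f and α'(x+f) := α(x) + f∘α, is a hom-Lie superalgebra if and only if ω is an even 2-cocycle, i.e. ω(x,y) = -(-1)^{|x||y|}ω(y,x) and π(α(x))ω(y,z)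 - (-1)^{|x||y|}π(α(y))ω(x,z) + (-1)^{(|x|+|y|)|z|}π(α(z))ω(x,y) + ω(α(x),[y,z]) + (-1)^{|y||z|}ω([x,z],α(y)) - ω([x,y],α(z)) = 0 for all homogeneous x,y,z ∈ L. -/
open Module

namespace HomLieSuperData

variable {K : Type*} [Field K] {L : Type*} [AddCommGroup L] [Module K L]

/-- The induced grading on the dual space: `(L*)_i` consists of the functionals
vanishing on every `L_j` with `j ≠ i`. -/
def dualGrading (D : HomLieSuperData K L) (i : ZMod 2) : Submodule K (Module.Dual K L) where
  carrier := {f | ∀ j : ZMod 2, j ≠ i → ∀ x ∈ D.grading j, f x = 0}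
  add_mem' := fun hf hg j hj x hx => by simp [hf j hj x hx, hg j hj x hx]
  zero_mem' := fun j hj x hx => rfl
  smul_mem' := fun c f hf j hj x hx => by simp [hf j hj x hx]

/-- The coadjoint action on homogeneous elements: for `x` of degree `i` and `f` of degree
`j`, `π(x) f = -(-1)^{ij} f ∘ ad(x)`. -/
def coadj (D : HomLieSuperData K L) (i j : ZMod 2) (x : L) (f : Module.Dual K L) :
    Module.Dual K L :=
  -(sgn K i j) • (f ∘ₗ D.bracket x)

/-- The coadjoint representation of `L` on `L*` exists, i.e.
`ad(x) ∘ ad(α y) - (-1)^{|x||y|} ad(y) ∘ ad(α x) = α ∘ ad([x,y])` on homogeneous elements. -/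
def HasCoadjRep (D : HomLieSuperData K L) : Prop :=
  ∀ i j : ZMod 2, ∀ x ∈ D.grading i, ∀ y ∈ D.grading j, ∀ m : L,
    D.bracket x (D.bracket (D.alpha y) m) - sgn K i j • D.bracket y (D.bracket (D.alpha x) m)
      = D.alpha (D.bracket (D.bracket x y) m)

/-- `ω : L × L → L*` is even: `ω(L_i, L_j) ⊆ (L*)_{i+j}`. -/
def OmegaEven (D : HomLieSuperData K L) (ω : L →ₗ[K] L →ₗ[K] Module.Dual K L) : Prop :=
  ∀ i j : ZMod 2, ∀ x ∈ D.grading i, ∀ y ∈ D.grading j, ω x y ∈ dualGrading D (i + j)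

/-- `ω` is super-skewsymmetric. -/
def OmegaSkew (D : HomLieSuperData K L) (ω : L →ₗ[K] L →ₗ[K] Module.Dual K L) : Prop :=
  ∀ i j : ZMod 2, ∀ x ∈ D.grading i, ∀ y ∈ D.grading j, ω x y = -(sgn K i j) • ω y x

/-- The 2-cocycle identity for `ω` with respect to the coadjoint representation. -/
def OmegaCocycle (D : HomLieSuperData K L) (ω : L →ₗ[K] L →ₗ[K] Module.Dual K L) : Prop :=
  ∀ i j k : ZMod 2, ∀ x ∈ D.grading i, ∀ y ∈ D.grading j, ∀ z ∈ D.grading k,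
    coadj D i (j + k) (D.alpha x) (ω y z)
      - sgn K i j • coadj D j (i + k) (D.alpha y) (ω x z)
      + sgn K (i + j) k • coadj D k (i + j) (D.alpha z) (ω x y)
      + ω (D.alpha x) (D.bracket y z)
      + sgn K j k • ω (D.bracket x z) (D.alpha y)
      - ω (D.bracket x y) (D.alpha z) = 0

/-- `ω` is supercyclic: `ω(x,y)(z) = (-1)^{|x|(|y|+|z|)} ω(y,z)(x)`. -/
def OmegaSupercyclic (D : HomLieSuperData K L) (ω : L →ₗ[K] L →ₗ[K] Module.Dual K L) : Prop :=
  ∀ i j k : ZMod 2, ∀ x ∈ D.grading i, ∀ y ∈ D.grading j, ∀ z ∈ D.grading k,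
    ω x y z = sgn K i (j + k) * ω y z x

/-- A bilinear bracket `Bext` on `L ⊕ L*` is the `T*`-extension bracket associated to `ω`
if on homogeneous elements
`[x+f, y+g] = [x,y] + ω(x,y) + π(x) g - (-1)^{|x||y|} π(y) f`. -/
def IsExtBracket (D : HomLieSuperData K L) (ω : L →ₗ[K] L →ₗ[K] Module.Dual K L)
    (Bext : (L × Module.Dual K L) →ₗ[K] (L × Module.Dual K L) →ₗ[K] (L × Module.Dual K L)) :
    Prop :=
  ∀ (i j : ZMod 2) (x y : L) (f g : Module.Dual K L),
    x ∈ D.grading i → f ∈ dualGrading D i → y ∈ D.grading j → g ∈ dualGrading D j →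
      Bext (x, f) (y, g) =
        (D.bracket x y, ω x y + coadj D i j x g - sgn K i j • coadj D j i y f)

/-- The `T*`-extension data on `L ⊕ L*` with a given bracket `Bext`: the grading is
`(L ⊕ L*)_i = L_i ⊕ (L*)_i` and the structure map is `α'(x+f) = α(x) + f ∘ α`. -/
def extData (D : HomLieSuperData K L)
    (Bext : (L × Module.Dual K L) →ₗ[K] (L × Module.Dual K L) →ₗ[K] (L × Module.Dual K L)) :
    HomLieSuperData K (L × Module.Dual K L) where
  grading i := (D.grading i).prod (dualGrading D i)
  bracket := Bext
  alpha := D.alpha.prodMap D.alpha.dualMap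

/-- The derived series `L^(0) = L`, `L^(n+1) = [L^(n), L^(n)]`. -/
def derivedSeries (D : HomLieSuperData K L) : ℕ → Submodule K L
  | 0 => ⊤
  | n + 1 => Submodule.span K
      {z | ∃ x ∈ derivedSeries D n, ∃ y ∈ derivedSeries D n, z = D.bracket x y}

/-- The central descending series `L^0 = L`, `L^{n+1} = [L^n, L]`. -/
def lowerCentral (D : HomLieSuperData K L) : ℕ → Submodule K L
  | 0 => ⊤
  | n + 1 => Submodule.span K {z | ∃ x ∈ lowerCentral D n, ∃ y : L, z = D.bracket x y}

/-- `D` is solvable of length exactly `k`. -/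
def IsSolvableOfLength (D : HomLieSuperData K L) (k : ℕ) : Prop :=
  derivedSeries D k = ⊥ ∧ ∀ m < k, derivedSeries D m ≠ ⊥

/-- `D` is nilpotent of length exactly `k`. -/
def IsNilpotentOfLength (D : HomLieSuperData K L) (k : ℕ) : Prop :=
  lowerCentral D k = ⊥ ∧ ∀ m < k, lowerCentral D m ≠ ⊥

end HomLieSuperData

section Aux

variable {K : Type*} [Field K] {L : Type*} [AddCommGroup L] [Module K L]

open HomLieSuperData

lemma zmod2_val (i : ZMod 2) : i.val = 0 ∨ i.val = 1 := by have := ZMod.val_lt i; omega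

lemma zmod2_add_self (i : ZMod 2) : i + i = 0 := by fin_cases i <;> decide

lemma sgn_comm (K : Type*) [Field K] (i j : ZMod 2) : sgn K i j = sgn K j i := by
  unfold sgn; rw [Nat.mul_comm]

lemma sgn_mul_self (K : Type*) [Field K] (i j : ZMod 2) : sgn K i j * sgn K i j = 1 := by
  unfold sgn; rw [← pow_add, ← two_mul, pow_mul]; norm_num

lemma sgn_add_left (K : Type*) [Field K] (i j k : ZMod 2) :
    sgn K (i + j) k = sgn K i k * sgn K j k := by
  unfold sgn
  rw [ZMod.val_add, ← pow_add, neg_one_pow_eq_pow_mod_two,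
    neg_one_pow_eq_pow_mod_two (n := i.val * k.val + j.val * k.val)]
  rcases zmod2_val i with h1 | h1 <;> rcases zmod2_val j with h2 | h2 <;>
    rcases zmod2_val k with h3 | h3 <;> rw [h1, h2, h3]

lemma sgn_add_right (K : Type*) [Field K] (i j k : ZMod 2) :
    sgn K i (j + k) = sgn K i j * sgn K i k := by
  rw [sgn_comm, sgn_add_left, sgn_comm K j i, sgn_comm K k i]

lemma mem_dualGrading {D : HomLieSuperData K L} {i : ZMod 2} {f : Module.Dual K L} :
    f ∈ D.dualGrading i ↔ ∀ j : ZMod 2, j ≠ i → ∀ x ∈ D.grading j, f x = 0 := Iff.rfl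

lemma coadj_apply (D : HomLieSuperData K L) (i j : ZMod 2) (x : L) (f : Module.Dual K L)
    (m : L) : D.coadj i j x f m = -(sgn K i j) * f (D.bracket x m) := by
  simp [HomLieSuperData.coadj]

lemma coadj_zero (D : HomLieSuperData K L) (i j : ZMod 2) (x : L) :
    D.coadj i j x 0 = 0 := by
  simp [HomLieSuperData.coadj]

lemma coadj_mem {D : HomLieSuperData K L} (hD : D.IsHomLieSuper) {i j : ZMod 2} {x : L}
    (hx : x ∈ D.grading i) {g : Module.Dual K L} (hg : g ∈ D.dualGrading j) :
    D.coadj i j x g ∈ D.dualGrading (i + j) := by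
  rw [mem_dualGrading]
  intro l hl m hm
  rw [coadj_apply]
  have hne : i + l ≠ j := by
    intro heq
    exact hl (by rw [← heq, ← add_assoc, zmod2_add_self i, zero_add])
  rw [hg (i + l) hne (D.bracket x m) (hD.bracket_even i l x hx m hm), mul_zero]

lemma dualMap_mem {D : HomLieSuperData K L} (hD : D.IsHomLieSuper) {i : ZMod 2}
    {f : Module.Dual K L} (hf : f ∈ D.dualGrading i) :
    D.alpha.dualMap f ∈ D.dualGrading i := by
  rw [mem_dualGrading]
  intro j hj m hm
  exact hf j hj (D.alpha m) (hD.alpha_even j m hm)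

lemma zmod2_iSup {M : Type*} [AddCommGroup M] [Module K M] (S : ZMod 2 → Submodule K M) :
    (⨆ i, S i) = S 0 ⊔ S 1 := by
  apply le_antisymm
  · apply iSup_le
    intro i
    fin_cases i
    · exact le_sup_left
    · exact le_sup_right
  · exact sup_le (le_iSup S 0) (le_iSup S 1)

lemma grading_sup {D : HomLieSuperData K L} (hD : D.IsHomLieSuper) :
    D.grading 0 ⊔ D.grading 1 = ⊤ := by
  rw [← zmod2_iSup D.grading]
  exact hD.internal.submodule_iSup_eq_top

lemma grading_disjoint {D : HomLieSuperData K L} (hD : D.IsHomLieSuper) (i : ZMod 2) :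
    Disjoint (D.grading i) (D.grading (i + 1)) := by
  refine (hD.internal.submodule_iSupIndep i).mono_right ?_
  exact le_iSup₂ (f := fun j _ => D.grading j) (i + 1)
    (show i + 1 ≠ i from (by decide : ∀ i : ZMod 2, i + 1 ≠ i) i)

lemma dualGrading_disjoint {D : HomLieSuperData K L} (hD : D.IsHomLieSuper) (i : ZMod 2) :
    Disjoint (D.dualGrading i) (D.dualGrading (i + 1)) := by
  rw [Submodule.disjoint_def]
  intro f hf hf'
  have hne : i + 1 ≠ i := (by decide : ∀ i : ZMod 2, i + 1 ≠ i) i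
  have hker : ∀ j : ZMod 2, D.grading j ≤ LinearMap.ker f := by
    intro j x hx
    rw [LinearMap.mem_ker]
    by_cases hji : j = i
    · exact hf' j (by rw [hji]; exact fun h => hne h.symm) x hx
    · exact hf j hji x hx
  have : LinearMap.ker f = ⊤ := by
    rw [eq_top_iff, ← hD.internal.submodule_iSup_eq_top]
    exact iSup_le hker
  exact LinearMap.ker_eq_top.mp this

lemma dual_decomp {D : HomLieSuperData K L} (hD : D.IsHomLieSuper) (f : Module.Dual K L) :
    ∃ f0 ∈ D.dualGrading 0, ∃ f1 ∈ D.dualGrading 1, f0 + f1 = f := by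
  classical
  set p : ZMod 2 → (L →ₗ[K] L) := fun i => (D.grading i).subtype ∘ₗ
    (DFinsupp.lapply (R := K) (M := fun l => ↥(D.grading l)) i) ∘ₗ
    ((LinearEquiv.ofBijective (DirectSum.coeLinearMap D.grading) hD.internal).symm.toLinearMap :
      L →ₗ[K] DirectSum (ZMod 2) fun l => ↥(D.grading l)) with hp
  have hp_ne : ∀ (j i : ZMod 2), j ≠ i → ∀ x ∈ D.grading j, p i x = 0 := by
    intro j i hji x hx
    simp only [hp, LinearMap.comp_apply, LinearEquiv.coe_coe, DFinsupp.lapply_apply]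
    erw [hD.internal.ofBijective_coeLinearMap_of_mem_ne hji hx]
    rfl
  have hp_eq : ∀ (i : ZMod 2), ∀ x ∈ D.grading i, p i x = x := by
    intro i x hx
    simp only [hp, LinearMap.comp_apply, LinearEquiv.coe_coe, DFinsupp.lapply_apply]
    erw [hD.internal.ofBijective_coeLinearMap_of_mem hx]
    rfl
  have hpsum : ∀ m : L, p 0 m + p 1 m = m := by
    intro m
    have hm : m ∈ D.grading 0 ⊔ D.grading 1 := by rw [grading_sup hD]; trivial
    obtain ⟨m0, h0, m1, h1, rfl⟩ := Submodule.mem_sup.mp hm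
    rw [map_add, map_add, hp_eq 0 m0 h0, hp_eq 1 m1 h1,
      hp_ne 1 0 (by decide) m1 h1, hp_ne 0 1 (by decide) m0 h0]
    abel
  refine ⟨f ∘ₗ p 0, ?_, f ∘ₗ p 1, ?_, ?_⟩
  · rw [mem_dualGrading]
    intro j hj x hx
    simp [LinearMap.comp_apply, hp_ne j 0 hj x hx]
  · rw [mem_dualGrading]
    intro j hj x hx
    simp [LinearMap.comp_apply, hp_ne j 1 hj x hx]
  · ext m
    simp only [LinearMap.add_apply, LinearMap.comp_apply, ← map_add, hpsum m]

lemma dualGrading_sup {D : HomLieSuperData K L} (hD : D.IsHomLieSuper) :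
    D.dualGrading 0 ⊔ D.dualGrading 1 = ⊤ := by
  rw [eq_top_iff]
  intro f _
  obtain ⟨f0, h0, f1, h1, hsum⟩ := dual_decomp hD f
  rw [← hsum]
  exact Submodule.add_mem_sup h0 h1

lemma ext_internal {D : HomLieSuperData K L} (hD : D.IsHomLieSuper)
    (Bext : (L × Module.Dual K L) →ₗ[K] (L × Module.Dual K L) →ₗ[K] (L × Module.Dual K L)) :
    DirectSum.IsInternal (D.extData Bext).grading := by
  rw [DirectSum.isInternal_submodule_iff_iSupIndep_and_iSup_eq_top]
  constructor
  · intro i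
    have hsub : (⨆ j, ⨆ (_ : j ≠ i), (D.extData Bext).grading j) ≤
        (D.extData Bext).grading (i + 1) := by
      apply iSup_le
      intro j
      apply iSup_le
      intro hj
      have : j = i + 1 := (by decide : ∀ i j : ZMod 2, j ≠ i → j = i + 1) i j hj
      rw [this]
    refine Disjoint.mono_right hsub ?_
    rw [Submodule.disjoint_def]
    rintro ⟨x, f⟩ h1 h2
    rw [show (D.extData Bext).grading = fun l => (D.grading l).prod (D.dualGrading l) from rfl]
      at h1 h2
    rw [Submodule.mem_prod] at h1 h2
    have hx : x = 0 := (Submodule.disjoint_def.mp (grading_disjoint hD i)) x h1.1 h2.1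
    have hf : f = 0 := (Submodule.disjoint_def.mp (dualGrading_disjoint hD i)) f h1.2 h2.2
    rw [hx, hf]; rfl
  · rw [show (D.extData Bext).grading = fun l => (D.grading l).prod (D.dualGrading l) from rfl,
      zmod2_iSup, Submodule.prod_sup_prod, grading_sup hD, dualGrading_sup hD]
    exact Submodule.prod_top

end Aux
section Aux2

variable {K : Type*} [Field K] {L : Type*} [AddCommGroup L] [Module K L]

open HomLieSuperData

lemma extData_bracket (D : HomLieSuperData K L)
    (Bext : (L × Module.Dual K L) →ₗ[K] (L × Module.Dual K L) →ₗ[K] (L × Module.Dual K L)) :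
    (D.extData Bext).bracket = Bext := rfl

lemma extData_alpha (D : HomLieSuperData K L)
    (Bext : (L × Module.Dual K L) →ₗ[K] (L × Module.Dual K L) →ₗ[K] (L × Module.Dual K L)) :
    (D.extData Bext).alpha = D.alpha.prodMap D.alpha.dualMap := rfl

lemma ext_jacobi_key {D : HomLieSuperData K L} (hD : D.IsHomLieSuper) (hco : D.HasCoadjRep)
    {ω : L →ₗ[K] L →ₗ[K] Module.Dual K L} (hωeven : D.OmegaEven ω) (hskew : D.OmegaSkew ω)
    {Bext : (L × Module.Dual K L) →ₗ[K] (L × Module.Dual K L) →ₗ[K] (L × Module.Dual K L)}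
    (hBext : D.IsExtBracket ω Bext) (i j k : ZMod 2) (x y z : L)
    (f g h : Module.Dual K L) (hx : x ∈ D.grading i) (hf : f ∈ D.dualGrading i)
    (hy : y ∈ D.grading j) (hg : g ∈ D.dualGrading j)
    (hz : z ∈ D.grading k) (hh : h ∈ D.dualGrading k) :
    sgn K i k • Bext ((D.alpha.prodMap D.alpha.dualMap) (x, f)) (Bext (y, g) (z, h))
      + sgn K i j • Bext ((D.alpha.prodMap D.alpha.dualMap) (y, g)) (Bext (z, h) (x, f))
      + sgn K j k • Bext ((D.alpha.prodMap D.alpha.dualMap) (z, h)) (Bext (x, f) (y, g))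
    = (0, sgn K i k • (coadj D i (j + k) (D.alpha x) (ω y z)
        - sgn K i j • coadj D j (i + k) (D.alpha y) (ω x z)
        + sgn K (i + j) k • coadj D k (i + j) (D.alpha z) (ω x y)
        + ω (D.alpha x) (D.bracket y z)
        + sgn K j k • ω (D.bracket x z) (D.alpha y)
        - ω (D.bracket x y) (D.alpha z))) := by
  have hαx := hD.alpha_even i x hx
  have hαy := hD.alpha_even j y hy
  have hαz := hD.alpha_even k z hz
  have hfα := dualMap_mem hD hf
  have hgα := dualMap_mem hD hg
  have hhα := dualMap_mem hD hh
  have hyz := hD.bracket_even j k y hy z hz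
  have hzx := hD.bracket_even k i z hz x hx
  have hxy := hD.bracket_even i j x hx y hy
  have hWyz : ω y z + D.coadj j k y h - sgn K j k • D.coadj k j z g
      ∈ D.dualGrading (j + k) := by
    have h3 := coadj_mem hD hz hg
    rw [add_comm k j] at h3
    exact sub_mem (add_mem (hωeven j k y hy z hz) (coadj_mem hD hy hh))
      (Submodule.smul_mem _ _ h3)
  have hWzx : ω z x + D.coadj k i z f - sgn K k i • D.coadj i k x h
      ∈ D.dualGrading (k + i) := by
    have h3 := coadj_mem hD hx hh
    rw [add_comm i k] at h3
    exact sub_mem (add_mem (hωeven k i z hz x hx) (coadj_mem hD hz hf))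
      (Submodule.smul_mem _ _ h3)
  have hWxy : ω x y + D.coadj i j x g - sgn K i j • D.coadj j i y f
      ∈ D.dualGrading (i + j) := by
    have h3 := coadj_mem hD hy hf
    rw [add_comm j i] at h3
    exact sub_mem (add_mem (hωeven i j x hx y hy) (coadj_mem hD hx hg))
      (Submodule.smul_mem _ _ h3)
  simp only [LinearMap.prodMap_apply]
  rw [hBext j k y z g h hy hg hz hh, hBext k i z x h f hz hh hx hf,
    hBext i j x y f g hx hf hy hg,
    hBext i (j + k) (D.alpha x) (D.bracket y z) (D.alpha.dualMap f) _ hαx hfα hyz hWyz,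
    hBext j (k + i) (D.alpha y) (D.bracket z x) (D.alpha.dualMap g) _ hαy hgα hzx hWzx,
    hBext k (i + j) (D.alpha z) (D.bracket x y) (D.alpha.dualMap h) _ hαz hhα hxy hWxy]
  simp only [Prod.smul_mk, Prod.mk_add_mk, Prod.mk.injEq]
  constructor
  · exact hD.jacobi i j k x hx y hy z hz
  · ext m
    have e1 : sgn K i (j + k) = sgn K i j * sgn K i k := sgn_add_right K i j k
    have e2 : sgn K (j + k) i = sgn K i j * sgn K i k := by rw [sgn_comm]; exact e1
    have e3 : sgn K j (k + i) = sgn K j k * sgn K i j := by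
      rw [sgn_add_right, sgn_comm K j i]
    have e4 : sgn K (k + i) j = sgn K j k * sgn K i j := by rw [sgn_comm]; exact e3
    have e5 : sgn K k (i + j) = sgn K i k * sgn K j k := by
      rw [sgn_add_right, sgn_comm K k i, sgn_comm K k j]
    have e6 : sgn K (i + j) k = sgn K i k * sgn K j k := by rw [sgn_comm]; exact e5
    have e7 : sgn K j i = sgn K i j := sgn_comm K j i
    have e8 : sgn K k i = sgn K i k := sgn_comm K k i
    have e9 : sgn K k j = sgn K j k := sgn_comm K k j
    have e10 : sgn K j (i + k) = sgn K j k * sgn K i j := by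
      rw [sgn_add_right, sgn_comm K j i]; ring
    simp only [HomLieSuperData.coadj, LinearMap.smul_apply, LinearMap.add_apply,
      LinearMap.sub_apply, LinearMap.comp_apply, LinearMap.neg_apply,
      LinearMap.dualMap_apply, smul_eq_mul, neg_smul, neg_mul, neg_neg, map_add, map_sub,
      map_smul, map_neg, e1, e2, e3, e4, e5, e6, e7, e8, e9, e10]
    have hxz := hD.bracket_even i k x hx z hz
    have hs1 := LinearMap.congr_fun (hskew k i z hz x hx) (D.bracket (D.alpha y) m)
    rw [sgn_comm K k i] at hs1
    simp only [LinearMap.smul_apply, smul_eq_mul, LinearMap.neg_apply, neg_smul,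
      neg_mul] at hs1
    have hs2a := congrArg (fun w => (ω (D.alpha y) w) m) (hD.skew k i z hz x hx)
    rw [sgn_comm K k i] at hs2a
    simp only [map_neg, map_smul, LinearMap.smul_apply, LinearMap.neg_apply, smul_eq_mul,
      neg_mul] at hs2a
    have hs2b := LinearMap.congr_fun (hskew j (i + k) (D.alpha y) hαy (D.bracket x z) hxz) m
    rw [e10] at hs2b
    simp only [LinearMap.smul_apply, smul_eq_mul, LinearMap.neg_apply, neg_smul,
      neg_mul] at hs2b
    have hs3 := LinearMap.congr_fun (hskew k (i + j) (D.alpha z) hαz (D.bracket x y) hxy) m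
    rw [e5] at hs3
    simp only [LinearMap.smul_apply, smul_eq_mul, LinearMap.neg_apply, neg_smul,
      neg_mul] at hs3
    have hc1 := congrArg f (hco j k y hy z hz m)
    simp only [map_sub, map_smul, smul_eq_mul] at hc1
    have hc2 := congrArg g (hco k i z hz x hx m)
    rw [sgn_comm K k i] at hc2
    simp only [map_sub, map_smul, smul_eq_mul] at hc2
    have hc3 := congrArg h (hco i j x hx y hy m)
    simp only [map_sub, map_smul, smul_eq_mul] at hc3
    have sq1 := sgn_mul_self K i j
    have sq2 := sgn_mul_self K i k
    have sq3 := sgn_mul_self K j k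
    linear_combination
      (-(sgn K i j * sgn K i j * sgn K j k)) * hs1
      + sgn K i j * hs2a
      + (-(sgn K i j * sgn K i k)) * hs2b
      + sgn K j k * hs3
      + (-(sgn K i j * sgn K i j * sgn K i k * sgn K i k * sgn K i k)) * hc1
      + (-(sgn K i j * sgn K i j * sgn K i j * sgn K j k * sgn K j k)) * hc2
      + (-(sgn K i k * sgn K i k * sgn K j k * sgn K j k * sgn K j k)) * hc3
      + (sgn K i k * sgn K j k * f (D.bracket z (D.bracket (D.alpha y) m))
        - sgn K i k * sgn K i k * sgn K j k * h (D.bracket x (D.bracket (D.alpha y) m))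
        - sgn K i k * sgn K j k * sgn K j k * f (D.bracket y (D.bracket (D.alpha z) m))
        + sgn K i k * sgn K j k * (ω (D.bracket x z) (D.alpha y)) m
        + sgn K i k * sgn K i k * sgn K i k * f (D.bracket y (D.bracket (D.alpha z) m))
        - sgn K i k * sgn K i k * sgn K i k * sgn K j k
            * f (D.bracket z (D.bracket (D.alpha y) m))
        + sgn K i j * sgn K j k * sgn K j k * g (D.bracket z (D.bracket (D.alpha x) m))
        - sgn K i j * sgn K i k * sgn K j k * sgn K j k
            * g (D.bracket x (D.bracket (D.alpha z) m))) * sq1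
      + (sgn K i j * sgn K j k * h (D.bracket y (D.bracket (D.alpha x) m))
        - sgn K i j * sgn K j k * sgn K j k * g (D.bracket z (D.bracket (D.alpha x) m))
        + sgn K i k * sgn K j k * sgn K j k * (ω x y) (D.bracket (D.alpha z) m)
        + sgn K j k * sgn K j k * sgn K j k * h (D.bracket x (D.bracket (D.alpha y) m))
        - sgn K i j * sgn K j k * sgn K j k * sgn K j k
            * h (D.bracket y (D.bracket (D.alpha x) m))
        - sgn K j k * h (D.bracket x (D.bracket (D.alpha y) m))
        + sgn K i k * f (D.bracket y (D.bracket (D.alpha z) m))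
        - sgn K i k * sgn K j k * f (D.bracket z (D.bracket (D.alpha y) m))) * sq2
      + (-(sgn K i k * (ω (D.bracket x y) (D.alpha z)) m)
        - sgn K i k * f (D.bracket y (D.bracket (D.alpha z) m))
        + sgn K j k * h (D.bracket x (D.bracket (D.alpha y) m))
        - sgn K i j * sgn K j k * h (D.bracket y (D.bracket (D.alpha x) m))) * sq3


end Aux2

/-- Given a hom-Lie superalgebra admitting the coadjoint representation and
an even bilinear `ω : L × L → L*`, the data `(L ⊕ L*, [·,·]_{L⊕L*}, α')` is a hom-Lie
superalgebra if and only if `ω` is an even 2-cocycle (super-skewsymmetric and satisfying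
the 2-cocycle identity). -/
theorem extension_isHomLie_iff_cocycle {K : Type*} [Field K]
    {L : Type*} [AddCommGroup L] [Module K L]
    (D : HomLieSuperData K L) (hD : D.IsHomLieSuper) (hco : D.HasCoadjRep)
    (ω : L →ₗ[K] L →ₗ[K] Module.Dual K L) (hωeven : D.OmegaEven ω)
    (Bext : (L × Module.Dual K L) →ₗ[K] (L × Module.Dual K L) →ₗ[K] (L × Module.Dual K L))
    (hBext : D.IsExtBracket ω Bext) :
    (D.extData Bext).IsHomLieSuper ↔ (D.OmegaSkew ω ∧ D.OmegaCocycle ω) := by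
  have hmem : ∀ (i : ZMod 2) (x : L), x ∈ D.grading i →
      ((x, (0 : Module.Dual K L)) ∈ (D.extData Bext).grading i) :=
    fun i x hx => Submodule.mem_prod.mpr ⟨hx, zero_mem _⟩
  constructor
  · intro hE
    have hskew : D.OmegaSkew ω := by
      intro i j x hx y hy
      have h1 := hE.skew i j (x, 0) (hmem i x hx) (y, 0) (hmem j y hy)
      rw [extData_bracket, hBext i j x y 0 0 hx (zero_mem _) hy (zero_mem _),
        hBext j i y x 0 0 hy (zero_mem _) hx (zero_mem _)] at h1
      simpa only [coadj_zero, smul_zero, add_zero, sub_zero, Prod.smul_mk, Prod.mk.injEq]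
        using (congrArg Prod.snd h1)
    refine ⟨hskew, ?_⟩
    intro i j k x hx y hy z hz
    have h1 := hE.jacobi i j k (x, 0) (hmem i x hx) (y, 0) (hmem j y hy)
      (z, 0) (hmem k z hz)
    rw [extData_bracket, extData_alpha,
      ext_jacobi_key hD hco hωeven hskew hBext i j k x y z 0 0 0 hx (zero_mem _) hy
        (zero_mem _) hz (zero_mem _)] at h1
    have h2 := congrArg Prod.snd h1
    simp only [Prod.snd_zero] at h2
    have h4 := congrArg (fun t => sgn K i k • t) h2
    simpa only [smul_smul, sgn_mul_self, one_smul, smul_zero] using h4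
  · rintro ⟨hskew, hcoc⟩
    refine ⟨ext_internal hD Bext, ?_, ?_, ?_, ?_⟩
    · rintro i j ⟨x, f⟩ hX ⟨y, g⟩ hY
      obtain ⟨hx, hf⟩ := Submodule.mem_prod.mp hX
      obtain ⟨hy, hg⟩ := Submodule.mem_prod.mp hY
      rw [extData_bracket, hBext i j x y f g hx hf hy hg]
      refine Submodule.mem_prod.mpr ⟨hD.bracket_even i j x hx y hy, ?_⟩
      have h3 := coadj_mem hD hy hf
      rw [add_comm j i] at h3
      exact sub_mem (add_mem (hωeven i j x hx y hy) (coadj_mem hD hx hg))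
        (Submodule.smul_mem _ _ h3)
    · rintro i ⟨x, f⟩ hX
      obtain ⟨hx, hf⟩ := Submodule.mem_prod.mp hX
      rw [extData_alpha]
      simp only [LinearMap.prodMap_apply]
      exact Submodule.mem_prod.mpr ⟨hD.alpha_even i x hx, dualMap_mem hD hf⟩
    · rintro i j ⟨x, f⟩ hX ⟨y, g⟩ hY
      obtain ⟨hx, hf⟩ := Submodule.mem_prod.mp hX
      obtain ⟨hy, hg⟩ := Submodule.mem_prod.mp hY
      rw [extData_bracket, hBext i j x y f g hx hf hy hg,
        hBext j i y x g f hy hg hx hf]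
      simp only [Prod.smul_mk, Prod.mk.injEq]
      constructor
      · exact hD.skew i j x hx y hy
      · ext m
        have hsxy := LinearMap.congr_fun (hskew i j x hx y hy) m
        simp only [LinearMap.smul_apply, smul_eq_mul, LinearMap.neg_apply, neg_smul,
          neg_mul] at hsxy
        have sq1 := sgn_mul_self K i j
        simp only [HomLieSuperData.coadj, sgn_comm K j i, LinearMap.smul_apply,
          LinearMap.add_apply, LinearMap.sub_apply, LinearMap.comp_apply,
          LinearMap.neg_apply, smul_eq_mul, neg_smul, neg_mul, neg_neg]
        linear_combination hsxy + (sgn K i j * g (D.bracket x m)) * sq1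
    · rintro i j k ⟨x, f⟩ hX ⟨y, g⟩ hY ⟨z, h⟩ hZ
      obtain ⟨hx, hf⟩ := Submodule.mem_prod.mp hX
      obtain ⟨hy, hg⟩ := Submodule.mem_prod.mp hY
      obtain ⟨hz, hh⟩ := Submodule.mem_prod.mp hZ
      rw [extData_bracket, extData_alpha,
        ext_jacobi_key hD hco hωeven hskew hBext i j k x y z f g h hx hf hy hg hz hh,
        hcoc i j k x hx y hy z hz]
      simp
end

section
/- Let (L,[·,·],α) be a hom-Lie superalgebra over a field K satisfying ad(x)∘ad(α(y)) - (-1)^{|x||y|} ad(y)∘ad(α(x)) = α∘ad([x,y]) for all homogeneous x,y, and let ω : L × L → L* be an even 2-cocycle, so that (L ⊕ L*, [·,·]_{L⊕L*}, α') with [x+f, y+g]_{L⊕L*} := [x,y] + ω(x,y) + π(x)g - (-1)^{|x||y|}π(y)f and α'(x+f) := α(x) + f∘α is a hom-Lie superalgebra. Define q_L(x+f, y+g) := f(y) + (-1)^{|x||y|}g(x). Then (L ⊕ L*, q_L, α') is a quadratic hom-Lie superalgebra (i.e. q_L is nondegenerate, invariant, supersymmetric and consistent) if and only if ω is supercyclic,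 i.e. ω(x,y)(z) = (-1)^{|x|(|y|+|z|)}ω(y,z)(x) for all homogeneous x,y,z ∈ L. -/
open Module

section Aux
variable {K : Type*} [Field K] {M : Type*} [AddCommGroup M] [Module K M]

variable {K : Type*} [Field K] {M : Type*} [AddCommGroup M] [Module K M]

lemma sgn00 : sgn K 0 0 = 1 := by
  show ((-1:K)^((0:ZMod 2).val * (0:ZMod 2).val)) = 1; norm_num
lemma sgn01 : sgn K 0 1 = 1 := by
  show ((-1:K)^((0:ZMod 2).val * (1:ZMod 2).val)) = 1; norm_num
lemma sgn10 : sgn K 1 0 = 1 := by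
  show ((-1:K)^((1:ZMod 2).val * (0:ZMod 2).val)) = 1; norm_num
lemma sgn11 : sgn K 1 1 = -1 := by
  show ((-1:K)^((1:ZMod 2).val * (1:ZMod 2).val)) = -1
  norm_num [show (1:ZMod 2).val = 1 from rfl]

lemma isCompl_of_internal' {G : ZMod 2 → Submodule K M} (h : DirectSum.IsInternal G)
    (j : ZMod 2) : IsCompl (G j) (G (j + 1)) := by
  have hne : ∀ j : ZMod 2, j ≠ j + 1 := by decide
  have huniv : (Set.univ : Set (ZMod 2)) = {j, j + 1} := by
    ext k
    have : ∀ k j : ZMod 2, k = j ∨ k = j + 1 := by decide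
    simpa using this k j
  exact (DirectSum.isInternal_submodule_iff_isCompl G (hne j) huniv).mp h

lemma decomp_of_internal' {G : ZMod 2 → Submodule K M} (h : DirectSum.IsInternal G)
    (x : M) : ∃ x0 ∈ G 0, ∃ x1 ∈ G 1, x = x0 + x1 := by
  have hc := isCompl_of_internal' h 0
  have hx : x ∈ G 0 ⊔ G (0 + 1) := by rw [hc.sup_eq_top]; trivial
  rw [Submodule.mem_sup] at hx
  obtain ⟨a, ha, b, hb, hab⟩ := hx
  exact ⟨a, ha, b, by simpa using hb, hab.symm⟩

lemma sep_of_internal' {G : ZMod 2 → Submodule K M} (h : DirectSum.IsInternal G)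
    {j : ZMod 2} {x : M} (hx : x ∈ G j)
    (hz : ∀ g : Module.Dual K M, (∀ l, l ≠ j → ∀ m ∈ G l, g m = 0) → g x = 0) : x = 0 := by
  have hc := isCompl_of_internal' h j
  rw [← Module.forall_dual_apply_eq_zero_iff K x]
  intro φ
  have hkey := hz (φ ∘ₗ (G j).subtype ∘ₗ Submodule.projectionOnto (G j) (G (j+1)) hc) ?_
  · have := Submodule.projectionOnto_apply_left hc ⟨x, hx⟩
    simpa [Submodule.projectionOnto_apply_of_mem_left hc hx] using hkey
  · intro l hl m hm
    have hl' : l = j + 1 := by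
      have : ∀ l j : ZMod 2, l ≠ j → l = j + 1 := by decide
      exact this l j hl
    subst hl'
    simp [Submodule.projectionOnto_apply_of_mem_right hc hm]

end Aux

/-- For a T*-extension `L ⊕ L*` by an even 2-cocycle `ω`, the canonical
bilinear form `q_L(x+f, y+g) = f(y) + (-1)^{|x||y|} g(x)` makes `(L ⊕ L*, q_L, α')` a
quadratic hom-Lie superalgebra (nondegenerate, invariant, supersymmetric, consistent) if
and only if `ω` is supercyclic. -/
theorem extension_quadratic_iff_supercyclic {K : Type*} [Field K]
    {L : Type*} [AddCommGroup L] [Module K L]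
    (D : HomLieSuperData K L) (hD : D.IsHomLieSuper) (hco : D.HasCoadjRep)
    (ω : L →ₗ[K] L →ₗ[K] Module.Dual K L)
    (hωeven : D.OmegaEven ω) (hωskew : D.OmegaSkew ω) (hωcoc : D.OmegaCocycle ω)
    (Bext : (L × Module.Dual K L) →ₗ[K] (L × Module.Dual K L) →ₗ[K] (L × Module.Dual K L))
    (hBext : D.IsExtBracket ω Bext) (hext : (D.extData Bext).IsHomLieSuper)
    (qExt : (L × Module.Dual K L) →ₗ[K] (L × Module.Dual K L) →ₗ[K] K)
    (hq : ∀ (i j : ZMod 2) (x y : L) (f g : Module.Dual K L),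
      x ∈ D.grading i → f ∈ D.dualGrading i → y ∈ D.grading j → g ∈ D.dualGrading j →
        qExt (x, f) (y, g) = f y + sgn K i j * g x) :
    ((∀ p : L × Module.Dual K L, (∀ q, qExt p q = 0) → p = 0) ∧
      (∀ p q r : L × Module.Dual K L, qExt (Bext p q) r = qExt p (Bext q r)) ∧
      (∀ i j : ZMod 2, ∀ p ∈ (D.extData Bext).grading i, ∀ q ∈ (D.extData Bext).grading j,
        qExt p q = sgn K i j • qExt q p) ∧
      (∀ i j : ZMod 2, i + j ≠ 0 →
        ∀ p ∈ (D.extData Bext).grading i, ∀ q ∈ (D.extData Bext).grading j, qExt p q = 0)) ↔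
      D.OmegaSupercyclic ω := by

  constructor
  · rintro ⟨-, hinv, -, -⟩
    intro i j k x hx y hy z hz
    have e1 := hBext i j x y 0 0 hx (Submodule.zero_mem _) hy (Submodule.zero_mem _)
    have e2 := hBext j k y z 0 0 hy (Submodule.zero_mem _) hz (Submodule.zero_mem _)
    have hc0 : ∀ (a b : ZMod 2) (w : L), D.coadj a b w (0 : Module.Dual K L) = 0 := by
      intro a b w
      simp [HomLieSuperData.coadj]
    have key := hinv (x, 0) (y, 0) (z, 0)
    rw [e1, e2] at key
    simp only [hc0, smul_zero, add_zero, sub_zero] at key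
    rw [hq (i+j) k _ z _ 0 (hD.bracket_even i j x hx y hy) (hωeven i j x hx y hy) hz
          (Submodule.zero_mem _),
        hq i (j+k) x _ 0 _ hx (Submodule.zero_mem _) (hD.bracket_even j k y hy z hz)
          (hωeven j k y hy z hz)] at key
    simpa using key
  · intro hsc
    have hcase : ∀ a : ZMod 2, a = 0 ∨ a = 1 := by decide
    have haa : ∀ a : ZMod 2, a + a = 0 := by decide
    have h11 : (1 + 1 : ZMod 2) = 0 := rfl
    have hcm : ∀ (a b : ZMod 2) (w : L) (g : Module.Dual K L), w ∈ D.grading a →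
        g ∈ D.dualGrading b → D.coadj a b w g ∈ D.dualGrading (a + b) := by
      intro a b w g hw hg l hl m hm
      have h1 : D.bracket w m ∈ D.grading (a + l) := hD.bracket_even a l w hw m hm
      have h2 : a + l ≠ b := by
        intro h
        exact hl (by rw [← h, ← add_assoc, haa, zero_add])
      simp [HomLieSuperData.coadj, hg _ h2 _ h1]
    have hBm2 : ∀ (i j : ZMod 2) (x y : L) (f g : Module.Dual K L), x ∈ D.grading i →
        f ∈ D.dualGrading i → y ∈ D.grading j → g ∈ D.dualGrading j →
        ω x y + D.coadj i j x g - sgn K i j • D.coadj j i y f ∈ D.dualGrading (i + j) := by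
      intro i j x y f g hx hf hy hg
      refine Submodule.sub_mem _ (Submodule.add_mem _ (hωeven i j x hx y hy) (hcm i j x g hx hg))
        (Submodule.smul_mem _ _ ?_)
      have := hcm j i y f hy hf
      rwa [add_comm j i] at this
    have hme : ∀ (i : ZMod 2) (p : L × Module.Dual K L), p ∈ (D.extData Bext).grading i ↔
        (p.1 ∈ D.grading i ∧ p.2 ∈ D.dualGrading i) := by
      intro i p
      exact Submodule.mem_prod
    have hih : ∀ (i j k : ZMod 2) (p q r : L × Module.Dual K L),
        p ∈ (D.extData Bext).grading i → q ∈ (D.extData Bext).grading j →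
        r ∈ (D.extData Bext).grading k →
        qExt (Bext p q) r = qExt p (Bext q r) := by
      rintro i j k ⟨x, f⟩ ⟨y, g⟩ ⟨z, h⟩ hp hq' hr
      obtain ⟨hx, hf⟩ := (hme i _).mp hp
      obtain ⟨hy, hg⟩ := (hme j _).mp hq'
      obtain ⟨hz, hh⟩ := (hme k _).mp hr
      rw [hBext i j x y f g hx hf hy hg, hBext j k y z g h hy hg hz hh,
          hq (i+j) k _ z _ h (hD.bracket_even i j x hx y hy) (hBm2 i j x y f g hx hf hy hg) hz hh,
          hq i (j+k) x _ f _ hx hf (hD.bracket_even j k y hy z hz) (hBm2 j k y z g h hy hg hz hh)]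
      simp only [HomLieSuperData.coadj, LinearMap.add_apply, LinearMap.sub_apply,
        LinearMap.smul_apply, LinearMap.neg_apply, LinearMap.comp_apply, smul_eq_mul,
        neg_smul, neg_mul, neg_neg]
      rw [hD.skew j i y hy x hx, hD.skew k i z hz x hx, hsc i j k x hx y hy z hz]
      simp only [map_smul, map_neg, smul_eq_mul, neg_smul, LinearMap.neg_apply, neg_mul, neg_neg]
      rcases hcase i with rfl | rfl <;> rcases hcase j with rfl | rfl <;>
        rcases hcase k with rfl | rfl <;>
        simp only [zero_add, add_zero, h11, sgn00, sgn01, sgn10, sgn11] <;> ring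
    have hinvfull : ∀ p q r : L × Module.Dual K L,
        qExt (Bext p q) r = qExt p (Bext q r) := by
      intro p q r
      obtain ⟨p0, hp0, p1, hp1, rfl⟩ := decomp_of_internal' hext.internal p
      obtain ⟨q0, hq0, q1, hq1, rfl⟩ := decomp_of_internal' hext.internal q
      obtain ⟨r0, hr0, r1, hr1, rfl⟩ := decomp_of_internal' hext.internal r
      simp only [map_add, LinearMap.add_apply]
      rw [hih 0 0 0 _ _ _ hp0 hq0 hr0, hih 0 0 1 _ _ _ hp0 hq0 hr1,
          hih 0 1 0 _ _ _ hp0 hq1 hr0, hih 0 1 1 _ _ _ hp0 hq1 hr1,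
          hih 1 0 0 _ _ _ hp1 hq0 hr0, hih 1 0 1 _ _ _ hp1 hq0 hr1,
          hih 1 1 0 _ _ _ hp1 hq1 hr0, hih 1 1 1 _ _ _ hp1 hq1 hr1]
    have hsym : ∀ i j : ZMod 2, ∀ p ∈ (D.extData Bext).grading i,
        ∀ q ∈ (D.extData Bext).grading j, qExt p q = sgn K i j • qExt q p := by
      rintro i j ⟨x, f⟩ hp ⟨y, g⟩ hq'
      obtain ⟨hx, hf⟩ := (hme i _).mp hp
      obtain ⟨hy, hg⟩ := (hme j _).mp hq'
      rw [hq i j x y f g hx hf hy hg, hq j i y x g f hy hg hx hf, smul_eq_mul]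
      rcases hcase i with rfl | rfl <;> rcases hcase j with rfl | rfl <;>
        simp only [sgn00, sgn01, sgn10, sgn11] <;> ring
    have hcons : ∀ i j : ZMod 2, i + j ≠ 0 → ∀ p ∈ (D.extData Bext).grading i,
        ∀ q ∈ (D.extData Bext).grading j, qExt p q = 0 := by
      rintro i j hij ⟨x, f⟩ hp ⟨y, g⟩ hq'
      obtain ⟨hx, hf⟩ := (hme i _).mp hp
      obtain ⟨hy, hg⟩ := (hme j _).mp hq'
      have hji : j ≠ i := by
        intro h
        subst h
        exact hij (haa j)
      have hij' : i ≠ j := fun h => hji h.symm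
      rw [hq i j x y f g hx hf hy hg, hf j hji y hy, hg i hij' x hx]
      simp
    have hnd : ∀ p : L × Module.Dual K L, (∀ q, qExt p q = 0) → p = 0 := by
      intro p hp
      obtain ⟨p0, hp0, p1, hp1, rfl⟩ := decomp_of_internal' hext.internal p
      obtain ⟨x0, f0⟩ := p0
      obtain ⟨x1, f1⟩ := p1
      obtain ⟨hx0, hf0⟩ := (hme 0 _).mp hp0
      obtain ⟨hx1, hf1⟩ := (hme 1 _).mp hp1
      have hfy : ∀ (j : ZMod 2) (y : L), y ∈ D.grading j → f0 y + f1 y = 0 := by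
        intro j y hy
        have h1 := hp (y, 0)
        rw [map_add, LinearMap.add_apply,
            hq 0 j x0 y f0 0 hx0 hf0 hy (Submodule.zero_mem _),
            hq 1 j x1 y f1 0 hx1 hf1 hy (Submodule.zero_mem _)] at h1
        simpa using h1
      have hgx : ∀ (j : ZMod 2) (g : Module.Dual K L), g ∈ D.dualGrading j →
          sgn K 0 j * g x0 + sgn K 1 j * g x1 = 0 := by
        intro j g hg
        have h1 := hp (0, g)
        rw [map_add, LinearMap.add_apply,
            hq 0 j x0 0 f0 g hx0 hf0 (Submodule.zero_mem _) hg,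
            hq 1 j x1 0 f1 g hx1 hf1 (Submodule.zero_mem _) hg] at h1
        simpa using h1
      have hx0z : x0 = 0 := by
        refine sep_of_internal' hD.internal hx0 ?_
        intro g hg'
        have hgmem : g ∈ D.dualGrading 0 := hg'
        have h1 := hgx 0 g hgmem
        have hg1 : g x1 = 0 := hg' 1 (by decide) x1 hx1
        rw [sgn00, sgn10, hg1] at h1
        simpa using h1
      have hx1z : x1 = 0 := by
        refine sep_of_internal' hD.internal hx1 ?_
        intro g hg'
        have hgmem : g ∈ D.dualGrading 1 := hg'
        have h1 := hgx 1 g hgmem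
        have hg0 : g x0 = 0 := hg' 0 (by decide) x0 hx0
        rw [sgn01, sgn11, hg0] at h1
        simp only [one_mul, mul_zero, zero_add, neg_mul, one_mul, neg_eq_zero] at h1
        exact h1
      have hffz : f0 + f1 = 0 := by
        apply LinearMap.ext
        intro y
        obtain ⟨y0, hy0, y1, hy1, rfl⟩ := decomp_of_internal' hD.internal y
        have e0 := hfy 0 y0 hy0
        have e1 := hfy 1 y1 hy1
        simp only [LinearMap.add_apply, LinearMap.zero_apply, map_add]
        linear_combination e0 + e1
      rw [Prod.mk_add_mk, Prod.ext_iff]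
      refine ⟨?_, ?_⟩
      · simp [hx0z, hx1z]
      · simpa using hffz
    exact ⟨hnd, hinvfull, hsym, hcons⟩
end

section
/- Let (L,[·,·],α) be a hom-Lie superalgebra over a field K admitting a T*-extension T*_ω L by a supercyclic even 2-cocycle ω. If L is solvable of length k, then T*_ω L is solvable of length r with k ≤ r ≤ k+1. -/
open Module

/-- If `L` is solvable of length `k`, then any T*-extension `T*_ω L` is
solvable of length `r` with `k ≤ r ≤ k + 1`. -/
theorem tStarExtension_solvable {K : Type*} [Field K]
    {L : Type*} [AddCommGroup L] [Module K L]
    (D : HomLieSuperData K L) (hD : D.IsHomLieSuper) (hco : D.HasCoadjRep)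
    (ω : L →ₗ[K] L →ₗ[K] Module.Dual K L)
    (hωeven : D.OmegaEven ω) (hωskew : D.OmegaSkew ω) (hωcoc : D.OmegaCocycle ω)
    (hωcyc : D.OmegaSupercyclic ω)
    (Bext : (L × Module.Dual K L) →ₗ[K] (L × Module.Dual K L) →ₗ[K] (L × Module.Dual K L))
    (hBext : D.IsExtBracket ω Bext) (hext : (D.extData Bext).IsHomLieSuper)
    (k : ℕ) (hk : D.IsSolvableOfLength k) :
    ∃ r : ℕ, k ≤ r ∧ r ≤ k + 1 ∧ (D.extData Bext).IsSolvableOfLength r := by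
  classical
  set E := D.extData Bext with hE
  -- every element of the extension is in the iSup of the grading
  have htop : ∀ p : L × Module.Dual K L, p ∈ ⨆ i, E.grading i := by
    intro p
    rw [hext.internal.submodule_iSup_eq_top]
    trivial
  -- first components multiply via the bracket of D
  have hfst : ∀ u v : L × Module.Dual K L, (Bext u v).1 = D.bracket u.1 v.1 := by
    intro u v
    refine Submodule.iSup_induction (motive := fun u => (Bext u v).1 = D.bracket u.1 v.1)
      _ (htop u) (fun i a ha => ?_) (by simp) (fun a b h1 h2 => by simp [map_add, h1, h2])
    refine Submodule.iSup_induction (motive := fun v => (Bext a v).1 = D.bracket a.1 v.1)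
      _ (htop v) (fun j b hb => ?_) (by simp) (fun x y h1 h2 => by simp [map_add, h1, h2])
    rcases Submodule.mem_prod.mp ha with ⟨ha1, ha2⟩
    rcases Submodule.mem_prod.mp hb with ⟨hb1, hb2⟩
    have := hBext i j a.1 b.1 a.2 b.2 ha1 ha2 hb1 hb2
    simp only [Prod.mk.eta] at this
    rw [this]
  -- the dual part is a square-zero ideal
  have hdualtop : ∀ p : L × Module.Dual K L, p.2 ∈ ⨆ i, HomLieSuperData.dualGrading D i := by
    intro p
    refine Submodule.iSup_induction (motive := fun q : L × Module.Dual K L =>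
        q.2 ∈ ⨆ i, HomLieSuperData.dualGrading D i)
      _ (htop p) (fun i a ha => ?_) (by simp) (fun x y h1 h2 => by simpa using add_mem h1 h2)
    exact Submodule.mem_iSup_of_mem i (Submodule.mem_prod.mp ha).2
  have hBzero : ∀ f g : Module.Dual K L,
      Bext (0, f) (0, g) = 0 := by
    intro f g
    refine Submodule.iSup_induction (motive := fun f => Bext (0, f) (0, g) = 0)
      _ (hdualtop (0, f)) (fun i a ha => ?_) (by simp [show ((0 : L), (0 : Module.Dual K L)) = 0 from rfl])
      (fun x y h1 h2 => ?_)
    · refine Submodule.iSup_induction (motive := fun g => Bext (0, a) (0, g) = 0)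
        _ (hdualtop (0, g)) (fun j b hb => ?_) (by simp [show ((0 : L), (0 : Module.Dual K L)) = 0 from rfl])
        (fun x y h1 h2 => ?_)
      · show Bext (0, a) (0, b) = 0
        have := hBext i j 0 0 a b (zero_mem _) ha (zero_mem _) hb
        rw [this]
        have hc1 : HomLieSuperData.coadj D i j 0 b = 0 := by
          simp [HomLieSuperData.coadj]
        have hc2 : HomLieSuperData.coadj D j i 0 a = 0 := by
          simp [HomLieSuperData.coadj]
        simp [hc1, hc2, Prod.ext_iff]
      · show Bext (0, a) (0, x + y) = 0
        have h3 : ((0 : L), x + y) = ((0 : L), x) + ((0 : L), y) := by simp [Prod.ext_iff]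
        rw [h3, map_add, h1, h2, add_zero]
    · show Bext (0, x + y) (0, g) = 0
      have h3 : ((0 : L), x + y) = ((0 : L), x) + ((0 : L), y) := by simp [Prod.ext_iff]
      rw [h3, map_add, LinearMap.add_apply, h1, h2, add_zero]
  -- derived series of E projects into derived series of D
  have hCle : ∀ n : ℕ, HomLieSuperData.derivedSeries E n ≤
      (HomLieSuperData.derivedSeries D n).prod ⊤ := by
    intro n
    induction n with
    | zero => simp [HomLieSuperData.derivedSeries]
    | succ n ih =>
      rw [HomLieSuperData.derivedSeries, Submodule.span_le]
      rintro z ⟨u, hu, v, hv, rfl⟩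
      refine Submodule.mem_prod.mpr ⟨?_, trivial⟩
      rw [show (E.bracket u v).1 = D.bracket u.1 v.1 from hfst u v]
      exact Submodule.subset_span ⟨u.1, (Submodule.mem_prod.mp (ih hu)).1,
        v.1, (Submodule.mem_prod.mp (ih hv)).1, rfl⟩
  -- derived series of D lifts to derived series of E
  have hDle : ∀ n : ℕ, HomLieSuperData.derivedSeries D n ≤
      Submodule.map (LinearMap.fst K L (Module.Dual K L)) (HomLieSuperData.derivedSeries E n) := by
    intro n
    induction n with
    | zero =>
      intro x _
      exact Submodule.mem_map.mpr ⟨(x, 0), Submodule.mem_top, rfl⟩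
    | succ n ih =>
      rw [HomLieSuperData.derivedSeries, Submodule.span_le]
      rintro z ⟨x, hx, y, hy, rfl⟩
      rcases ih hx with ⟨u, hu, hux⟩
      rcases ih hy with ⟨v, hv, hvy⟩
      refine Submodule.mem_map.mpr ⟨Bext u v, Submodule.subset_span ⟨u, hu, v, hv, rfl⟩, ?_⟩
      simp only [LinearMap.fst_apply] at hux hvy ⊢
      rw [hfst u v, hux, hvy]
  -- E^(k+1) = ⊥
  have hEk1 : HomLieSuperData.derivedSeries E (k + 1) = ⊥ := by
    rw [HomLieSuperData.derivedSeries]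
    refine le_bot_iff.mp (Submodule.span_le.mpr ?_)
    rintro z ⟨u, hu, v, hv, rfl⟩
    have hu' := hCle k hu
    have hv' := hCle k hv
    rw [hk.1] at hu' hv'
    have hu1 : u.1 = 0 := (Submodule.mem_prod.mp hu').1
    have hv1 : v.1 = 0 := (Submodule.mem_prod.mp hv').1
    have : E.bracket u v = Bext (0, u.2) (0, v.2) := by
      rw [show ((0 : L), u.2) = u by exact Prod.ext hu1.symm rfl,
        show ((0 : L), v.2) = v by exact Prod.ext hv1.symm rfl]
      rfl
    rw [this, hBzero]
    exact Submodule.zero_mem ⊥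
  -- E^(m) ≠ ⊥ for m < k
  have hEne : ∀ m < k, HomLieSuperData.derivedSeries E m ≠ ⊥ := by
    intro m hm hbot
    apply hk.2 m hm
    have := hDle m
    rw [hbot, Submodule.map_bot, le_bot_iff] at this
    exact this
  by_cases hcase : HomLieSuperData.derivedSeries E k = ⊥
  · exact ⟨k, le_refl k, Nat.le_succ k, hcase, hEne⟩
  · refine ⟨k + 1, Nat.le_succ k, le_refl _, hEk1, fun m hm => ?_⟩
    rcases Nat.lt_succ_iff_lt_or_eq.mp hm with hm' | rfl
    · exact hEne m hm'
    · exact hcase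
end

section
/- Let (L,[·,·],α) be a hom-Lie superalgebra over a field K admitting the trivial T*-extension T*_0 L. If L = I ⊕ J is a direct sum of two nonzero hom-Lie superalgebra ideals I and J, then T*_0 L decomposes as the direct sum T*_0 I ⊕ T*_0 J of two nonzero hom-Lie superalgebra ideals of T*_0 L, where T*_0 I := I ⊕ I* with I* = {f ∈ L* : f(J) = 0} and T*_0 J := J ⊕ J* with J* = {f ∈ L* : f(I) = 0}. -/
open Module

/-- If `L = I ⊕ J` is a direct sum of two nonzero graded ideals, then the
trivial T*-extension `T*_0 L` decomposes as the direct sum of the two nonzero graded ideals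
`T*_0 I = I ⊕ I*` and `T*_0 J = J ⊕ J*`, where `I* = J^⊥` and `J* = I^⊥` in `L*`. -/
theorem trivial_tStarExtension_decomposition {K : Type*} [Field K]
    {L : Type*} [AddCommGroup L] [Module K L]
    (D : HomLieSuperData K L) (hD : D.IsHomLieSuper) (hco : D.HasCoadjRep)
    (Bext : (L × Module.Dual K L) →ₗ[K] (L × Module.Dual K L) →ₗ[K] (L × Module.Dual K L))
    (hBext : D.IsExtBracket 0 Bext) (hext : (D.extData Bext).IsHomLieSuper)
    (I J : Submodule K L) (hInz : I ≠ ⊥) (hJnz : J ≠ ⊥)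
    (hIgraded : I = (I ⊓ D.grading 0) ⊔ (I ⊓ D.grading 1))
    (hJgraded : J = (J ⊓ D.grading 0) ⊔ (J ⊓ D.grading 1))
    (hIideal : ∀ x ∈ I, ∀ y : L, D.bracket x y ∈ I)
    (hJideal : ∀ x ∈ J, ∀ y : L, D.bracket x y ∈ J)
    (hsum : I ⊔ J = ⊤) (hint : I ⊓ J = ⊥) :
    (I.prod J.dualAnnihilator ≠ ⊥ ∧ J.prod I.dualAnnihilator ≠ ⊥) ∧
    (I.prod J.dualAnnihilator ⊔ J.prod I.dualAnnihilator = ⊤ ∧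
      I.prod J.dualAnnihilator ⊓ J.prod I.dualAnnihilator = ⊥) ∧
    (I.prod J.dualAnnihilator =
        (I.prod J.dualAnnihilator ⊓ (D.extData Bext).grading 0) ⊔
          (I.prod J.dualAnnihilator ⊓ (D.extData Bext).grading 1) ∧
      J.prod I.dualAnnihilator =
        (J.prod I.dualAnnihilator ⊓ (D.extData Bext).grading 0) ⊔
          (J.prod I.dualAnnihilator ⊓ (D.extData Bext).grading 1)) ∧
    (∀ p ∈ I.prod J.dualAnnihilator, ∀ q : L × Module.Dual K L,
        Bext p q ∈ I.prod J.dualAnnihilator) ∧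
    (∀ p ∈ J.prod I.dualAnnihilator, ∀ q : L × Module.Dual K L,
        Bext p q ∈ J.prod I.dualAnnihilator) := by
    classical
  -- basic facts about the grading
  have hzmod : ∀ i : ZMod 2, i = 0 ∨ i = 1 := by decide
  have hGsup : D.grading 0 ⊔ D.grading 1 = ⊤ := by
    refine le_antisymm le_top ?_
    rw [← hD.internal.submodule_iSup_eq_top]
    exact iSup_le fun i => (hzmod i).elim (fun h => h ▸ le_sup_left) (fun h => h ▸ le_sup_right)
  have hGdisj : Disjoint (D.grading 0) (D.grading 1) :=
    hD.internal.submodule_iSupIndep.pairwiseDisjoint (show (0 : ZMod 2) ≠ 1 by decide)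
  have hGcompl : IsCompl (D.grading 0) (D.grading 1) := ⟨hGdisj, codisjoint_iff.mpr hGsup⟩
  -- projections onto the graded pieces
  set π0 : L →ₗ[K] L :=
    (D.grading 0).subtype ∘ₗ (D.grading 0).linearProjOfIsCompl (D.grading 1) hGcompl with hπ0def
  set π1 : L →ₗ[K] L :=
    (D.grading 1).subtype ∘ₗ (D.grading 1).linearProjOfIsCompl (D.grading 0) hGcompl.symm
    with hπ1def
  have hπ0mem : ∀ x : L, π0 x ∈ D.grading 0 :=
    fun x => ((D.grading 0).linearProjOfIsCompl (D.grading 1) hGcompl x).2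
  have hπ1mem : ∀ x : L, π1 x ∈ D.grading 1 :=
    fun x => ((D.grading 1).linearProjOfIsCompl (D.grading 0) hGcompl.symm x).2
  have hπsum : ∀ x : L, π0 x + π1 x = x :=
    fun x => Submodule.projection_add_projection_eq_self hGcompl x
  have hπ0_left : ∀ x ∈ D.grading 0, π0 x = x := by
    intro x hx
    show ((D.grading 0).projectionOnto (D.grading 1) hGcompl x : L) = x
    rw [show x = ((⟨x, hx⟩ : D.grading 0) : L) from rfl,
      Submodule.projectionOnto_apply_left hGcompl ⟨x, hx⟩]
  have hπ0_right : ∀ x ∈ D.grading 1, π0 x = 0 := by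
    intro x hx
    show ((D.grading 0).projectionOnto (D.grading 1) hGcompl x : L) = 0
    rw [Submodule.projectionOnto_apply_of_mem_right hGcompl hx]; rfl
  have hπ1_left : ∀ x ∈ D.grading 1, π1 x = x := by
    intro x hx
    show ((D.grading 1).projectionOnto (D.grading 0) hGcompl.symm x : L) = x
    rw [show x = ((⟨x, hx⟩ : D.grading 1) : L) from rfl,
      Submodule.projectionOnto_apply_left hGcompl.symm ⟨x, hx⟩]
  have hπ1_right : ∀ x ∈ D.grading 0, π1 x = 0 := by
    intro x hx
    show ((D.grading 1).projectionOnto (D.grading 0) hGcompl.symm x : L) = 0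
    rw [Submodule.projectionOnto_apply_of_mem_right hGcompl.symm hx]; rfl
  -- the projections preserve graded submodules
  have hπpres : ∀ A : Submodule K L, A = (A ⊓ D.grading 0) ⊔ (A ⊓ D.grading 1) →
      ∀ z ∈ A, π0 z ∈ A ∧ π1 z ∈ A := by
    intro A hA z hz
    rw [hA] at hz
    obtain ⟨a, ha, b, hb, rfl⟩ := Submodule.mem_sup.1 hz
    have h0 : π0 (a + b) = a := by
      rw [map_add, hπ0_left a ha.2, hπ0_right b hb.2, add_zero]
    have h1 : π1 (a + b) = b := by
      rw [map_add, hπ1_right a ha.2, hπ1_left b hb.2, zero_add]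
    exact ⟨by rw [h0]; exact ha.1, by rw [h1]; exact hb.1⟩
  -- brackets with ideal elements on the right
  have hbr : ∀ A : Submodule K L, A = (A ⊓ D.grading 0) ⊔ (A ⊓ D.grading 1) →
      (∀ x ∈ A, ∀ y : L, D.bracket x y ∈ A) → ∀ x : L, ∀ z ∈ A, D.bracket x z ∈ A := by
    intro A hA hAid x z hz
    have key : ∀ k : ZMod 2, ∀ w ∈ A ⊓ D.grading k, D.bracket x w ∈ A := by
      intro k w hw
      have hx' : D.bracket x w = D.bracket (π0 x) w + D.bracket (π1 x) w := by
        conv_lhs => rw [← hπsum x]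
        rw [map_add, LinearMap.add_apply]
      rw [hx']
      refine Submodule.add_mem _ ?_ ?_
      · rw [hD.skew 0 k (π0 x) (hπ0mem x) w hw.2]
        exact Submodule.smul_mem _ _ (hAid w hw.1 (π0 x))
      · rw [hD.skew 1 k (π1 x) (hπ1mem x) w hw.2]
        exact Submodule.smul_mem _ _ (hAid w hw.1 (π1 x))
    rw [hA] at hz
    obtain ⟨a, ha, b, hb, rfl⟩ := Submodule.mem_sup.1 hz
    rw [map_add]
    exact Submodule.add_mem _ (key 0 a ha) (key 1 b hb)
  have hbrI : ∀ x : L, ∀ z ∈ I, D.bracket x z ∈ I := hbr I hIgraded hIideal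
  have hbrJ : ∀ x : L, ∀ z ∈ J, D.bracket x z ∈ J := hbr J hJgraded hJideal
  -- membership of composites with projections in the dual grading
  have hdualmem : ∀ (f : Module.Dual K L) (i : ZMod 2),
      (∀ j : ZMod 2, j ≠ i → ∀ x ∈ D.grading j, f x = 0) → f ∈ D.dualGrading i :=
    fun f i h => h
  have hfπ0 : ∀ f : Module.Dual K L, f ∘ₗ π0 ∈ D.dualGrading 0 := by
    intro f
    refine hdualmem _ _ fun j hj x hx => ?_
    have hj1 : j = 1 := (hzmod j).resolve_left hj
    subst hj1
    show f (π0 x) = 0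
    rw [hπ0_right x hx, map_zero]
  have hfπ1 : ∀ f : Module.Dual K L, f ∘ₗ π1 ∈ D.dualGrading 1 := by
    intro f
    refine hdualmem _ _ fun j hj x hx => ?_
    have hj0 : j = 0 := (hzmod j).resolve_right hj
    subst hj0
    show f (π1 x) = 0
    rw [hπ1_right x hx, map_zero]
  have hfsum : ∀ f : Module.Dual K L, f = f ∘ₗ π0 + f ∘ₗ π1 := by
    intro f
    ext w
    show f w = f (π0 w) + f (π1 w)
    rw [← f.map_add, hπsum]
  -- composites with projections stay in annihilators of graded submodules
  have hfann : ∀ (B : Submodule K L), B = (B ⊓ D.grading 0) ⊔ (B ⊓ D.grading 1) →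
      ∀ f ∈ B.dualAnnihilator, f ∘ₗ π0 ∈ B.dualAnnihilator ∧ f ∘ₗ π1 ∈ B.dualAnnihilator := by
    intro B hB f hf
    constructor <;> rw [Submodule.mem_dualAnnihilator] <;> intro w hw <;>
      rw [LinearMap.comp_apply]
    · exact (Submodule.mem_dualAnnihilator f).1 hf _ (hπpres B hB w hw).1
    · exact (Submodule.mem_dualAnnihilator f).1 hf _ (hπpres B hB w hw).2
  -- coadjoint action lemmas
  have hco1 : ∀ (B : Submodule K L), (∀ x : L, ∀ z ∈ B, D.bracket x z ∈ B) →
      ∀ (i j : ZMod 2) (y : L) (f : Module.Dual K L), f ∈ B.dualAnnihilator →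
      D.coadj i j y f ∈ B.dualAnnihilator := by
    intro B hbrB i j y f hf
    rw [Submodule.mem_dualAnnihilator]
    intro w hw
    have h0 : f (D.bracket y w) = 0 :=
      (Submodule.mem_dualAnnihilator f).1 hf _ (hbrB y w hw)
    simp [HomLieSuperData.coadj, h0]
  have hco2 : ∀ (B : Submodule K L) (i j : ZMod 2) (x : L) (g : Module.Dual K L),
      (∀ z ∈ B, D.bracket x z = 0) → D.coadj i j x g ∈ B.dualAnnihilator := by
    intro B i j x g hz
    rw [Submodule.mem_dualAnnihilator]
    intro w hw
    simp [HomLieSuperData.coadj, hz w hw]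
  -- the generic ideal statement
  have hmain : ∀ A B : Submodule K L,
      A = (A ⊓ D.grading 0) ⊔ (A ⊓ D.grading 1) →
      B = (B ⊓ D.grading 0) ⊔ (B ⊓ D.grading 1) →
      (∀ x ∈ A, ∀ y : L, D.bracket x y ∈ A) →
      (∀ x : L, ∀ z ∈ B, D.bracket x z ∈ B) →
      (∀ x ∈ A, ∀ z ∈ B, D.bracket x z = 0) →
      ∀ p ∈ A.prod B.dualAnnihilator, ∀ q : L × Module.Dual K L,
        Bext p q ∈ A.prod B.dualAnnihilator := by
    intro A B hAgr hBgr hAid hbrB hzero p hp q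
    obtain ⟨x, f⟩ := p
    obtain ⟨y, g⟩ := q
    have hxA : x ∈ A := hp.1
    have hfB : f ∈ B.dualAnnihilator := hp.2
    have hterm : ∀ (i j : ZMod 2) (xi yj : L) (fi gj : Module.Dual K L),
        xi ∈ D.grading i → xi ∈ A → fi ∈ D.dualGrading i → fi ∈ B.dualAnnihilator →
        yj ∈ D.grading j → gj ∈ D.dualGrading j →
        Bext (xi, fi) (yj, gj) ∈ A.prod B.dualAnnihilator := by
      intro i j xi yj fi gj hxiG hxiA hfiG hfiB hyjG hgjG
      rw [hBext i j xi yj fi gj hxiG hfiG hyjG hgjG]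
      refine Submodule.mem_prod.2 ⟨hAid xi hxiA yj, ?_⟩
      have hzero' : ∀ z ∈ B, D.bracket xi z = 0 := fun z hz => hzero xi hxiA z hz
      simp only [LinearMap.zero_apply, zero_add]
      exact Submodule.sub_mem _ (hco2 B i j xi gj hzero')
        (Submodule.smul_mem _ _ (hco1 B hbrB j i yj fi hfiB))
    have hxeq : x = π0 x + π1 x := (hπsum x).symm
    have hp0 : (x, f) = (π0 x, f ∘ₗ π0) + (π1 x, f ∘ₗ π1) := by
      rw [Prod.mk_add_mk, Prod.mk.injEq]
      exact ⟨hxeq, hfsum f⟩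
    have hq0 : (y, g) = (π0 y, g ∘ₗ π0) + (π1 y, g ∘ₗ π1) := by
      rw [Prod.mk_add_mk, Prod.mk.injEq]
      exact ⟨(hπsum y).symm, hfsum g⟩
    rw [hp0, hq0]
    simp only [map_add, LinearMap.add_apply]
    have hxp := hπpres A hAgr x hxA
    have hfa := hfann B hBgr f hfB
    refine Submodule.add_mem _ (Submodule.add_mem _ ?_ ?_) (Submodule.add_mem _ ?_ ?_)
    · exact hterm 0 0 _ _ _ _ (hπ0mem x) hxp.1 (hfπ0 f) hfa.1 (hπ0mem y) (hfπ0 g)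
    · exact hterm 1 0 _ _ _ _ (hπ1mem x) hxp.2 (hfπ1 f) hfa.2 (hπ0mem y) (hfπ0 g)
    · exact hterm 0 1 _ _ _ _ (hπ0mem x) hxp.1 (hfπ0 f) hfa.1 (hπ1mem y) (hfπ1 g)
    · exact hterm 1 1 _ _ _ _ (hπ1mem x) hxp.2 (hfπ1 f) hfa.2 (hπ1mem y) (hfπ1 g)
  -- disjointness facts
  have hzeroIJ : ∀ x ∈ I, ∀ z ∈ J, D.bracket x z = 0 := by
    intro x hx z hz
    have h1 : D.bracket x z ∈ I := hIideal x hx z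
    have h2 : D.bracket x z ∈ J := hbrJ x z hz
    have := hint ▸ Submodule.mem_inf.2 ⟨h1, h2⟩
    simpa using this
  have hzeroJI : ∀ x ∈ J, ∀ z ∈ I, D.bracket x z = 0 := by
    intro x hx z hz
    have h1 : D.bracket x z ∈ I := hbrI x z hz
    have h2 : D.bracket x z ∈ J := hJideal x hx z
    have := hint ▸ Submodule.mem_inf.2 ⟨h1, h2⟩
    simpa using this
  -- the generic gradedness statement
  have hgrprod : ∀ A B : Submodule K L,
      A = (A ⊓ D.grading 0) ⊔ (A ⊓ D.grading 1) →
      B = (B ⊓ D.grading 0) ⊔ (B ⊓ D.grading 1) →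
      A.prod B.dualAnnihilator =
        (A.prod B.dualAnnihilator ⊓ (D.extData Bext).grading 0) ⊔
          (A.prod B.dualAnnihilator ⊓ (D.extData Bext).grading 1) := by
    intro A B hAgr hBgr
    refine le_antisymm ?_ (sup_le inf_le_left inf_le_left)
    rintro ⟨x, f⟩ hp
    have hxA : x ∈ A := hp.1
    have hfB : f ∈ B.dualAnnihilator := hp.2
    have hxp := hπpres A hAgr x hxA
    have hfa := hfann B hBgr f hfB
    refine Submodule.mem_sup.2 ⟨(π0 x, f ∘ₗ π0), ?_, (π1 x, f ∘ₗ π1), ?_, ?_⟩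
    · exact Submodule.mem_inf.2 ⟨Submodule.mem_prod.2 ⟨hxp.1, hfa.1⟩,
        Submodule.mem_prod.2 ⟨hπ0mem x, hfπ0 f⟩⟩
    · exact Submodule.mem_inf.2 ⟨Submodule.mem_prod.2 ⟨hxp.2, hfa.2⟩,
        Submodule.mem_prod.2 ⟨hπ1mem x, hfπ1 f⟩⟩
    · rw [Prod.mk_add_mk, Prod.mk.injEq]
      exact ⟨hπsum x, (hfsum f).symm⟩
  -- complements in the dual
  have hcompl : IsCompl I J := ⟨disjoint_iff.mpr hint, codisjoint_iff.mpr hsum⟩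
  have hdualcompl : IsCompl I.dualAnnihilator J.dualAnnihilator :=
    Subspace.isCompl_dualAnnihilator hcompl
  refine ⟨⟨?_, ?_⟩, ⟨?_, ?_⟩, ⟨?_, ?_⟩, ?_, ?_⟩
  · obtain ⟨x, hxI, hx0⟩ := Submodule.exists_mem_ne_zero_of_ne_bot hInz
    refine Submodule.ne_bot_iff _ |>.2 ⟨(x, 0), Submodule.mem_prod.2 ⟨hxI, Submodule.zero_mem _⟩, ?_⟩
    simp [Prod.ext_iff, hx0]
  · obtain ⟨x, hxJ, hx0⟩ := Submodule.exists_mem_ne_zero_of_ne_bot hJnz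
    refine Submodule.ne_bot_iff _ |>.2 ⟨(x, 0), Submodule.mem_prod.2 ⟨hxJ, Submodule.zero_mem _⟩, ?_⟩
    simp [Prod.ext_iff, hx0]
  · rw [Submodule.prod_sup_prod, hsum, sup_comm J.dualAnnihilator I.dualAnnihilator,
      hdualcompl.sup_eq_top, Submodule.prod_top]
  · rw [Submodule.prod_inf_prod, hint, inf_comm J.dualAnnihilator I.dualAnnihilator,
      hdualcompl.inf_eq_bot, Submodule.prod_bot]
  · exact hgrprod I J hIgraded hJgraded
  · exact hgrprod J I hJgraded hIgraded
  · exact hmain I J hIgraded hJgraded hIideal hbrJ hzeroIJ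
  · exact hmain J I hJgraded hIgraded hJideal hbrI hzeroJI
end
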